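/- Let X be a locally compact metric space and let f_n : X → ℝ be continuous functions converging locally uniformly to f∞ : X → ℝ. Then the sublevel sets satisfy: {f∞ < 0} ⊆ Li_{n→∞} {f_n ≤ 0} ⊆ Ls_{n→∞} {f_n ≤ 0} ⊆ {f∞ ≤ 0}. In particular, if the closure of {f∞ < 0} equals {f∞ ≤ 0}, then the Kuratowski limit of {f_n ≤ 0} exists and equals {f∞ ≤ 0}. -/

import Mathlib

open Filter

/-- Kuratowski limit inferior of a sequence of sets in a metric space:
points `q` with `limsup_n d(q, C_n) = 0` (with `d(q,∅) = +∞`). -/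
def kurLi {X : Type*} [MetricSpace X] (C : ℕ → Set X) : Set X :=
  {q | Filter.limsup (fun n => EMetric.infEdist q (C n)) Filter.atTop = 0}

/-- Kuratowski limit superior of a sequence of sets in a metric space:
points `q` with `liminf_n d(q, C_n) = 0` (with `d(q,∅) = +∞`). -/
def kurLs {X : Type*} [MetricSpace X] (C : ℕ → Set X) : Set X :=
  {q | Filter.liminf (fun n => EMetric.infEdist q (C n)) Filter.atTop = 0}

section aux

variable {X : Type*} [MetricSpace X]
  (f : ℕ → X → ℝ) (g : X → ℝ)

/-- eventually membership at a point where g < 0 -/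
lemma aux_ev_mem (hconv : TendstoLocallyUniformly f g Filter.atTop)
    {x : X} (hx : g x < 0) : ∀ᶠ n in atTop, f n x ≤ 0 := by
  have h : Tendsto (fun n => f n x) atTop (nhds (g x)) :=
    (tendstoLocallyUniformlyOn_univ.mpr hconv).tendsto_at (Set.mem_univ x)
  have := h.eventually (eventually_lt_nhds hx)
  exact this.mono fun n hn => hn.le

lemma aux_limsup_zero {C : ℕ → Set X} {x : X} (h : ∀ᶠ n in atTop, x ∈ C n) :
    Filter.limsup (fun n => EMetric.infEdist x (C n)) Filter.atTop = 0 := by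
  have : ∀ᶠ n in atTop, EMetric.infEdist x (C n) = (0 : ENNReal) :=
    h.mono fun n hn => EMetric.infEdist_zero_of_mem hn
  rw [limsup_congr this, limsup_const]

end aux


/-- For continuous `f_n → f∞` locally uniformly on a locally compact metric space,
`{f∞ < 0} ⊆ Li {f_n ≤ 0} ⊆ Ls {f_n ≤ 0} ⊆ {f∞ ≤ 0}`; in particular if
`closure {f∞ < 0} = {f∞ ≤ 0}`, the Kuratowski limit of `{f_n ≤ 0}` exists and equals
`{f∞ ≤ 0}`. -/
theorem statement3 {X : Type*} [MetricSpace X] [LocallyCompactSpace X]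
    (f : ℕ → X → ℝ) (hf : ∀ n, Continuous (f n)) (g : X → ℝ)
    (hconv : TendstoLocallyUniformly f g Filter.atTop) :
    {x | g x < 0} ⊆ kurLi (fun n => {x | f n x ≤ 0}) ∧
    kurLi (fun n => {x | f n x ≤ 0}) ⊆ kurLs (fun n => {x | f n x ≤ 0}) ∧
    kurLs (fun n => {x | f n x ≤ 0}) ⊆ {x | g x ≤ 0} ∧
    (closure {x | g x < 0} = {x | g x ≤ 0} →
      kurLi (fun n => {x | f n x ≤ 0}) = {x | g x ≤ 0} ∧
      kurLs (fun n => {x | f n x ≤ 0}) = {x | g x ≤ 0}) := by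
  set C : ℕ → Set X := fun n => {x | f n x ≤ 0} with hC
  -- part 1
  have h1 : {x | g x < 0} ⊆ kurLi C := by
    intro x hx
    exact aux_limsup_zero ((aux_ev_mem f g hconv hx).mono fun n hn => hn)
  -- part 2
  have h2 : kurLi C ⊆ kurLs C := by
    intro q hq
    have hle : liminf (fun n => EMetric.infEdist q (C n)) atTop ≤
        limsup (fun n => EMetric.infEdist q (C n)) atTop := liminf_le_limsup
    simp only [kurLi, Set.mem_setOf_eq] at hq
    simp only [kurLs, Set.mem_setOf_eq]
    exact le_antisymm (hq ▸ hle) zero_le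
  -- part 3
  have h3 : kurLs C ⊆ {x | g x ≤ 0} := by
    intro q hq
    simp only [kurLs, Set.mem_setOf_eq] at hq
    simp only [Set.mem_setOf_eq]
    by_contra hpos
    push_neg at hpos
    set ε := g q / 2 with hε
    have hεpos : 0 < ε := by positivity
    -- locally uniform convergence at q with ε
    obtain ⟨t, ht, hev⟩ := hconv _ (Metric.dist_mem_uniformity hεpos) q
    -- continuity of g
    have hgc : Continuous g := hconv.continuous (Frequently.of_forall hf)
    have hg2 : ∀ᶠ y in nhds q, |g y - g q| < ε := by
      have := (hgc.tendsto q).eventually (Metric.ball_mem_nhds (g q) hεpos)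
      exact this.mono fun y hy => by
        rw [Real.dist_eq] at hy; exact hy
    obtain ⟨δ, hδpos, hδ⟩ := Metric.mem_nhds_iff.mp (inter_mem ht hg2)
    have hfreq : ∃ᶠ n in atTop, EMetric.infEdist q (C n) < ENNReal.ofReal δ := by
      exact frequently_lt_of_liminf_lt (by isBoundedDefault)
        (by rw [hq]; exact ENNReal.ofReal_pos.mpr hδpos)
    obtain ⟨n, hn1, hn2⟩ := (hfreq.and_eventually hev).exists
    obtain ⟨x, hxC, hxd⟩ := EMetric.infEdist_lt_iff.mp hn1
    have hxball : x ∈ Metric.ball q δ := by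
      rw [Metric.mem_ball, dist_comm]
      exact (edist_lt_ofReal).mp hxd
    have hxs := hδ hxball
    have hx1 : dist (g x) (f n x) < ε := hn2 x hxs.1
    have hx2 : |g x - g q| < ε := hxs.2
    have hx3 : f n x ≤ 0 := hxC
    rw [Real.dist_eq] at hx1
    have := abs_lt.mp hx1
    have := abs_lt.mp hx2
    simp only [hε] at *
    linarith
  refine ⟨h1, h2, h3, fun hcl => ?_⟩
  -- closure {g<0} ⊆ kurLi
  have h4 : {x | g x ≤ 0} ⊆ kurLi C := by
    rw [← hcl]
    intro q hq
    simp only [kurLi, Set.mem_setOf_eq]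
    by_contra hne
    have hpos : 0 < limsup (fun n => EMetric.infEdist q (C n)) atTop :=
      pos_iff_ne_zero.mpr hne
    obtain ⟨p, hp, hpd⟩ := EMetric.mem_closure_iff.mp hq _ hpos
    have hev : ∀ᶠ n in atTop, EMetric.infEdist q (C n) ≤ edist q p :=
      (aux_ev_mem f g hconv hp).mono fun n hn => by
        calc EMetric.infEdist q (C n) ≤ edist q p + EMetric.infEdist p (C n) :=
              EMetric.infEdist_le_edist_add_infEdist
          _ = edist q p := by rw [show EMetric.infEdist p (C n) = 0 from EMetric.infEdist_zero_of_mem (show p ∈ C n from hn), add_zero]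
    have : limsup (fun n => EMetric.infEdist q (C n)) atTop ≤ edist q p :=
      limsup_le_of_le (by isBoundedDefault) hev
    exact absurd (lt_of_le_of_lt this hpd) (lt_irrefl _)
  exact ⟨le_antisymm (h2.trans h3) h4, le_antisymm h3 (h4.trans h2)⟩
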